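/- Let n ≥ 1 and let g_1,…,g_n be real constants. Define Q : ℝ^n × ℝ^n → ℝ by Q(x,z) = exp( g_1 e^{z_1} + Σ_{i=1}^{n−1} ( e^{x_i − z_i} + g_{i+1} e^{z_{i+1} − x_i} ) + e^{x_n − z_n} ). Then for all x, z ∈ ℝ^n: −(1/2) Σ_{i=1}^{n} ∂²Q/∂x_i² + [ g_1 e^{x_1} + Σ_{i=1}^{n−1} g_{i+1} e^{x_{i+1} − x_i} ] Q = −(1/2) Σ_{i=1}^{n} ∂²Q/∂z_i² + [ (g_1/2)( e^{z_1} + g_1 e^{2 z_1} ) + Σ_{i=1}^{n−1} g_{i+1} e^{z_{i+1} − z_i} ] Q. That is, Q intertwines the quadratic Hamiltonians of the B_n and BC_n open Toda chains. -/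

import Mathlib

open Real

/-- Second partial derivative of `f` in the `i`-th coordinate at `x`. -/
noncomputable def pd2 {k : ℕ} (f : (Fin k → ℝ) → ℝ) (i : Fin k) (x : Fin k → ℝ) : ℝ :=
  deriv (deriv (fun t : ℝ => f (Function.update x i t))) (x i)

/-- The elementary kernel intertwining the `B_n` and `BC_n` open Toda
chains (`n = m + 1 ≥ 1`):
`Q(x,z) = exp( g_1 e^{z_1} + Σ_{i=1}^{n−1} ( e^{x_i − z_i} + g_{i+1} e^{z_{i+1} − x_i} ) + e^{x_n − z_n} )`. -/
noncomputable def Qker (m : ℕ) (g x z : Fin (m + 1) → ℝ) : ℝ :=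
  Real.exp (g 0 * Real.exp (z 0)
    + (∑ i : Fin m, (Real.exp (x i.castSucc - z i.castSucc)
        + g i.succ * Real.exp (z i.succ - x i.castSucc)))
    + Real.exp (x (Fin.last m) - z (Fin.last m)))

noncomputable def Sex (m : ℕ) (g x z : Fin (m + 1) → ℝ) : ℝ :=
  g 0 * Real.exp (z 0)
    + (∑ i : Fin m, (Real.exp (x i.castSucc - z i.castSucc)
        + g i.succ * Real.exp (z i.succ - x i.castSucc)))
    + Real.exp (x (Fin.last m) - z (Fin.last m))

lemma Qker_eq (m : ℕ) (g x z : Fin (m + 1) → ℝ) : Qker m g x z = Real.exp (Sex m g x z) := rfl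


lemma key (a b c p q t0 : ℝ) :
    deriv (deriv (fun t => Real.exp (c + a * Real.exp (t - p) + b * Real.exp (q - t)))) t0
      = ((a * Real.exp (t0 - p) - b * Real.exp (q - t0)) ^ 2
          + (a * Real.exp (t0 - p) + b * Real.exp (q - t0)))
        * Real.exp (c + a * Real.exp (t0 - p) + b * Real.exp (q - t0)) := by
  have hin : ∀ t : ℝ, HasDerivAt (fun s => c + a * Real.exp (s - p) + b * Real.exp (q - s))
      (a * Real.exp (t - p) - b * Real.exp (q - t)) t := by
    intro t
    have h1 : HasDerivAt (fun s : ℝ => s - p) 1 t := (hasDerivAt_id t).sub_const p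
    have h2 : HasDerivAt (fun s : ℝ => q - s) (-1) t := by
      simpa using (hasDerivAt_id t).const_sub q
    have h := ((h1.exp.const_mul a).const_add c).add (h2.exp.const_mul b)
    refine h.congr_deriv ?_
    ring
  have hd1 : deriv (fun t => Real.exp (c + a * Real.exp (t - p) + b * Real.exp (q - t)))
      = fun t => (a * Real.exp (t - p) - b * Real.exp (q - t))
          * Real.exp (c + a * Real.exp (t - p) + b * Real.exp (q - t)) := by
    funext t
    rw [(hin t).exp.deriv]
    ring
  rw [hd1]
  have h1 : HasDerivAt (fun t : ℝ => a * Real.exp (t - p) - b * Real.exp (q - t))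
      (a * Real.exp (t0 - p) + b * Real.exp (q - t0)) t0 := by
    have ha : HasDerivAt (fun s : ℝ => s - p) 1 t0 := (hasDerivAt_id t0).sub_const p
    have hb : HasDerivAt (fun s : ℝ => q - s) (-1) t0 := by
      simpa using (hasDerivAt_id t0).const_sub q
    have h := (ha.exp.const_mul a).sub (hb.exp.const_mul b)
    refine h.congr_deriv ?_
    ring
  refine (h1.mul (hin t0).exp).deriv.trans ?_
  ring

lemma pd2_exp {k : ℕ} (f : (Fin k → ℝ) → ℝ) (i : Fin k) (x : Fin k → ℝ)
    (a b c p q : ℝ)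
    (h : ∀ t, f (Function.update x i t)
        = Real.exp (c + a * Real.exp (t - p) + b * Real.exp (q - t))) :
    pd2 f i x = ((a * Real.exp (x i - p) - b * Real.exp (q - x i)) ^ 2
          + (a * Real.exp (x i - p) + b * Real.exp (q - x i)))
        * Real.exp (c + a * Real.exp (x i - p) + b * Real.exp (q - x i)) := by
  unfold pd2
  have hf : (fun t => f (Function.update x i t))
      = fun t => Real.exp (c + a * Real.exp (t - p) + b * Real.exp (q - t)) := funext h
  rw [hf, key]

lemma sum_split1 {m : ℕ} (j : Fin m) (F G : Fin m → ℝ) (h : ∀ k, k ≠ j → F k = G k) :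
    ∑ k, F k = (∑ k, G k) + (F j - G j) := by
  rw [← Finset.add_sum_erase _ F (Finset.mem_univ j),
      ← Finset.add_sum_erase _ G (Finset.mem_univ j),
      Finset.sum_congr rfl (fun k hk => h k (Finset.ne_of_mem_erase hk))]
  ring

lemma sum_split2 {m : ℕ} (j j' : Fin m) (hjj : j' ≠ j) (F G : Fin m → ℝ)
    (h : ∀ k, k ≠ j → k ≠ j' → F k = G k) :
    ∑ k, F k = (∑ k, G k) + (F j - G j) + (F j' - G j') := by
  have hj' : j' ∈ Finset.univ.erase j := Finset.mem_erase.2 ⟨hjj, Finset.mem_univ j'⟩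
  rw [← Finset.add_sum_erase _ F (Finset.mem_univ j),
      ← Finset.add_sum_erase _ G (Finset.mem_univ j),
      ← Finset.add_sum_erase _ F hj', ← Finset.add_sum_erase _ G hj',
      Finset.sum_congr rfl (fun k hk => h k (Finset.ne_of_mem_erase (Finset.mem_of_mem_erase hk))
        (Finset.ne_of_mem_erase hk))]
  ring

lemma telescope {m : ℕ} (f : Fin (m + 1) → ℝ) :
    ∑ j : Fin m, (f j.castSucc - f j.succ) = f 0 - f (Fin.last m) := by
  induction m with
  | zero => simp
  | succ n ih =>
    rw [Fin.sum_univ_castSucc]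
    have h := ih (fun i => f i.castSucc)
    simp only [Fin.succ_castSucc] at h ⊢
    rw [h]
    simp [Fin.succ_last]

lemma PX_last (m : ℕ) (g x z : Fin (m + 1) → ℝ) :
    pd2 (fun u => Qker m g u z) (Fin.last m) x
      = (Real.exp (x (Fin.last m) - z (Fin.last m)) ^ 2
          + Real.exp (x (Fin.last m) - z (Fin.last m))) * Qker m g x z := by
  have h := pd2_exp (fun u => Qker m g u z) (Fin.last m) x 1 0
    (Sex m g x z - Real.exp (x (Fin.last m) - z (Fin.last m))) (z (Fin.last m)) 0 ?_
  · rw [h, Qker_eq]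
    simp only [one_mul, zero_mul, add_zero, sub_zero]
    ring_nf
  · intro t
    simp only [Qker_eq]
    congr 1
    unfold Sex
    have hs : ∀ k : Fin m, Function.update x (Fin.last m) t k.castSucc = x k.castSucc :=
      fun k => Function.update_of_ne (Fin.castSucc_lt_last k).ne _ _
    simp only [hs, Function.update_self]
    ring

lemma PX_cs (m : ℕ) (g x z : Fin (m + 1) → ℝ) (j : Fin m) :
    pd2 (fun u => Qker m g u z) j.castSucc x
      = ((Real.exp (x j.castSucc - z j.castSucc)
            - g j.succ * Real.exp (z j.succ - x j.castSucc)) ^ 2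
          + (Real.exp (x j.castSucc - z j.castSucc)
            + g j.succ * Real.exp (z j.succ - x j.castSucc))) * Qker m g x z := by
  have h := pd2_exp (fun u => Qker m g u z) j.castSucc x 1 (g j.succ)
    (Sex m g x z - Real.exp (x j.castSucc - z j.castSucc)
      - g j.succ * Real.exp (z j.succ - x j.castSucc)) (z j.castSucc) (z j.succ) ?_
  · rw [h, Qker_eq]
    simp only [one_mul]
    ring_nf
  · intro t
    simp only [Qker_eq]
    congr 1
    unfold Sex
    rw [sum_split1 j _ (fun k => Real.exp (x k.castSucc - z k.castSucc)
          + g k.succ * Real.exp (z k.succ - x k.castSucc))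
        (fun k hk => by
          rw [Function.update_of_ne (fun hc => hk (Fin.castSucc_injective m hc)) _ _])]
    rw [Function.update_of_ne (Fin.castSucc_lt_last j).ne' _ _, Function.update_self]
    ring

lemma PZ0 (m : ℕ) (g x z : Fin (m + 1) → ℝ) :
    pd2 (fun v => Qker m g x v) 0 z
      = ((g 0 * Real.exp (z 0) - Real.exp (x 0 - z 0)) ^ 2
          + (g 0 * Real.exp (z 0) + Real.exp (x 0 - z 0))) * Qker m g x z := by
  have h := pd2_exp (fun v => Qker m g x v) 0 z (g 0) 1
    (Sex m g x z - g 0 * Real.exp (z 0) - Real.exp (x 0 - z 0)) 0 (x 0) ?_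
  · rw [h, Qker_eq]
    simp only [one_mul, sub_zero]
    ring_nf
  · intro t
    simp only [Qker_eq]
    congr 1
    unfold Sex
    cases m with
    | zero =>
      simp only [Finset.univ_eq_empty, Finset.sum_empty, Fin.last]
      have h0 : (Fin.mk 0 (by norm_num) : Fin 1) = 0 := rfl
      rw [h0, Function.update_self]
      simp only [sub_zero, one_mul]
      ring
    | succ n =>
      have hlast : Function.update z 0 t (Fin.last (n + 1)) = z (Fin.last (n + 1)) :=
        Function.update_of_ne (Fin.last_pos (n := n)).ne' _ _
      rw [hlast]
      rw [sum_split1 0 _ (fun k => Real.exp (x k.castSucc - z k.castSucc)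
            + g k.succ * Real.exp (z k.succ - x k.castSucc))
          (fun k hk => by
            rw [Function.update_of_ne (by simpa [Fin.castSucc_eq_zero_iff] using hk) _ _,
              Function.update_of_ne (Fin.succ_ne_zero k) _ _])]
      rw [show ((0 : Fin (n + 1)).castSucc) = (0 : Fin (n + 2)) from Fin.castSucc_zero]
      rw [Function.update_self, Function.update_of_ne (Fin.succ_ne_zero (0 : Fin (n+1))) _ _]
      simp only [sub_zero, one_mul]
      ring

lemma PZs (m : ℕ) (g x z : Fin (m + 1) → ℝ) (j : Fin m) :
    pd2 (fun v => Qker m g x v) j.succ z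
      = ((g j.succ * Real.exp (z j.succ - x j.castSucc)
            - Real.exp (x j.succ - z j.succ)) ^ 2
          + (g j.succ * Real.exp (z j.succ - x j.castSucc)
            + Real.exp (x j.succ - z j.succ))) * Qker m g x z := by
  have h := pd2_exp (fun v => Qker m g x v) j.succ z (g j.succ) 1
    (Sex m g x z - g j.succ * Real.exp (z j.succ - x j.castSucc)
      - Real.exp (x j.succ - z j.succ)) (x j.castSucc) (x j.succ) ?_
  · rw [h, Qker_eq]
    simp only [one_mul]
    ring_nf
  · intro t
    simp only [Qker_eq]
    congr 1
    unfold Sex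
    rw [Function.update_of_ne (Fin.succ_ne_zero j).symm _ _]
    by_cases hjl : j.succ = Fin.last m
    · rw [← hjl, Function.update_self]
      rw [sum_split1 j
          (fun k => Real.exp (x k.castSucc - Function.update z j.succ t k.castSucc)
            + g k.succ * Real.exp (Function.update z j.succ t k.succ - x k.castSucc))
          (fun k => Real.exp (x k.castSucc - z k.castSucc)
            + g k.succ * Real.exp (z k.succ - x k.castSucc))
          (fun k hk => by
            have h1 : k.castSucc ≠ j.succ := fun hc => (Fin.castSucc_lt_last k).ne (hc.trans hjl)
            have h2 : k.succ ≠ j.succ := fun hs => hk (Fin.succ_injective m hs)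
            simp only [Function.update_of_ne h1, Function.update_of_ne h2])]
      simp only [Function.update_of_ne (Fin.castSucc_lt_succ (i := j)).ne, Function.update_self]
      ring
    · have hlt : (j : ℕ) + 1 < m :=
        lt_of_le_of_ne j.isLt (fun hv => hjl (Fin.ext (by simp [hv])))
      set j' : Fin m := ⟨(j : ℕ) + 1, hlt⟩ with hj'
      have hcs : j'.castSucc = j.succ := Fin.ext (by simp [hj'])
      have hjj : j' ≠ j := fun hh => Nat.succ_ne_self (j : ℕ) (congrArg Fin.val hh)
      rw [Function.update_of_ne (fun hl => hjl hl.symm) _ _]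
      rw [sum_split2 j j' hjj
          (fun k => Real.exp (x k.castSucc - Function.update z j.succ t k.castSucc)
            + g k.succ * Real.exp (Function.update z j.succ t k.succ - x k.castSucc))
          (fun k => Real.exp (x k.castSucc - z k.castSucc)
            + g k.succ * Real.exp (z k.succ - x k.castSucc))
          (fun k hk hk' => by
            have h1 : k.castSucc ≠ j.succ := fun hc => hk' (Fin.ext (by
                  have := congrArg Fin.val hc
                  simpa [hj'] using this))
            have h2 : k.succ ≠ j.succ := fun hs => hk (Fin.succ_injective m hs)
            simp only [Function.update_of_ne h1, Function.update_of_ne h2])]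
      have hsne : j'.succ ≠ j.succ := fun hs => hjj (Fin.succ_injective m hs)
      rw [hcs]
      simp only [Function.update_of_ne (Fin.castSucc_lt_succ (i := j)).ne,
        Function.update_of_ne hsne, Function.update_self]
      ring

lemma scalar (m : ℕ) (g x z : Fin (m + 1) → ℝ) :
    -(1/2) * ((∑ j : Fin m, ((Real.exp (x j.castSucc - z j.castSucc)
            - g j.succ * Real.exp (z j.succ - x j.castSucc)) ^ 2
          + (Real.exp (x j.castSucc - z j.castSucc)
            + g j.succ * Real.exp (z j.succ - x j.castSucc))))
        + (Real.exp (x (Fin.last m) - z (Fin.last m)) ^ 2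
            + Real.exp (x (Fin.last m) - z (Fin.last m))))
      + (g 0 * Real.exp (x 0) + ∑ i : Fin m, g i.succ * Real.exp (x i.succ - x i.castSucc))
    = -(1/2) * ((((g 0 * Real.exp (z 0) - Real.exp (x 0 - z 0)) ^ 2
          + (g 0 * Real.exp (z 0) + Real.exp (x 0 - z 0))))
        + ∑ j : Fin m, ((g j.succ * Real.exp (z j.succ - x j.castSucc)
            - Real.exp (x j.succ - z j.succ)) ^ 2
          + (g j.succ * Real.exp (z j.succ - x j.castSucc)
            + Real.exp (x j.succ - z j.succ))))
      + ((g 0 / 2) * (Real.exp (z 0) + g 0 * Real.exp (2 * z 0))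
          + ∑ i : Fin m, g i.succ * Real.exp (z i.succ - z i.castSucc)) := by
  have hkey : ∀ j : Fin m,
      ((Real.exp (x j.castSucc - z j.castSucc)
            - g j.succ * Real.exp (z j.succ - x j.castSucc)) ^ 2
          + (Real.exp (x j.castSucc - z j.castSucc)
            + g j.succ * Real.exp (z j.succ - x j.castSucc)))
      - ((g j.succ * Real.exp (z j.succ - x j.castSucc)
            - Real.exp (x j.succ - z j.succ)) ^ 2
          + (g j.succ * Real.exp (z j.succ - x j.castSucc)
            + Real.exp (x j.succ - z j.succ)))
      = ((Real.exp (x j.castSucc - z j.castSucc) ^ 2 + Real.exp (x j.castSucc - z j.castSucc))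
          - (Real.exp (x j.succ - z j.succ) ^ 2 + Real.exp (x j.succ - z j.succ)))
        - 2 * (g j.succ * Real.exp (z j.succ - z j.castSucc))
        + 2 * (g j.succ * Real.exp (x j.succ - x j.castSucc)) := by
    intro j
    have h12 : Real.exp (x j.castSucc - z j.castSucc) * Real.exp (z j.succ - x j.castSucc)
        = Real.exp (z j.succ - z j.castSucc) := by
      rw [← Real.exp_add]; congr 1; ring
    have h23 : Real.exp (z j.succ - x j.castSucc) * Real.exp (x j.succ - z j.succ)
        = Real.exp (x j.succ - x j.castSucc) := by
      rw [← Real.exp_add]; congr 1; ring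
    linear_combination (-2 * g j.succ) * h12 + (2 * g j.succ) * h23
  have hsum : (∑ j : Fin m, ((Real.exp (x j.castSucc - z j.castSucc)
            - g j.succ * Real.exp (z j.succ - x j.castSucc)) ^ 2
          + (Real.exp (x j.castSucc - z j.castSucc)
            + g j.succ * Real.exp (z j.succ - x j.castSucc))))
      - (∑ j : Fin m, ((g j.succ * Real.exp (z j.succ - x j.castSucc)
            - Real.exp (x j.succ - z j.succ)) ^ 2
          + (g j.succ * Real.exp (z j.succ - x j.castSucc)
            + Real.exp (x j.succ - z j.succ))))
      = ((Real.exp (x 0 - z 0) ^ 2 + Real.exp (x 0 - z 0))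
          - (Real.exp (x (Fin.last m) - z (Fin.last m)) ^ 2
              + Real.exp (x (Fin.last m) - z (Fin.last m))))
        - 2 * ∑ i : Fin m, g i.succ * Real.exp (z i.succ - z i.castSucc)
        + 2 * ∑ i : Fin m, g i.succ * Real.exp (x i.succ - x i.castSucc) := by
    have ht : (∑ j : Fin m, ((Real.exp (x j.castSucc - z j.castSucc) ^ 2
            + Real.exp (x j.castSucc - z j.castSucc))
          - (Real.exp (x j.succ - z j.succ) ^ 2 + Real.exp (x j.succ - z j.succ))))
        = (Real.exp (x 0 - z 0) ^ 2 + Real.exp (x 0 - z 0))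
          - (Real.exp (x (Fin.last m) - z (Fin.last m)) ^ 2
              + Real.exp (x (Fin.last m) - z (Fin.last m))) :=
      telescope (fun i => Real.exp (x i - z i) ^ 2 + Real.exp (x i - z i))
    rw [← Finset.sum_sub_distrib,
      Finset.sum_congr rfl (fun j _ => hkey j),
      Finset.sum_add_distrib, Finset.sum_sub_distrib, ht,
      ← Finset.mul_sum, ← Finset.mul_sum]
  have e1 : Real.exp (z 0) * Real.exp (z 0) = Real.exp (2 * z 0) := by
    rw [← Real.exp_add]; congr 1; ring
  have e2 : Real.exp (z 0) * Real.exp (x 0 - z 0) = Real.exp (x 0) := by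
    rw [← Real.exp_add]; congr 1; ring
  linear_combination (-(1/2) : ℝ) * hsum + (g 0 ^ 2 / 2) * e1 - g 0 * e2

/-- The kernel `Q` intertwines the quadratic Hamiltonians of the `B_n` and
`BC_n` open Toda chains, `n = m + 1 ≥ 1`. -/
theorem B_BC_intertwining (m : ℕ) (g : Fin (m + 1) → ℝ)
    (x z : Fin (m + 1) → ℝ) :
    -(1/2) * (∑ i : Fin (m + 1), pd2 (fun u => Qker m g u z) i x)
      + (g 0 * Real.exp (x 0)
          + ∑ i : Fin m, g i.succ * Real.exp (x i.succ - x i.castSucc)) * Qker m g x z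
    = -(1/2) * (∑ i : Fin (m + 1), pd2 (fun v => Qker m g x v) i z)
      + ((g 0 / 2) * (Real.exp (z 0) + g 0 * Real.exp (2 * z 0))
          + ∑ i : Fin m, g i.succ * Real.exp (z i.succ - z i.castSucc)) * Qker m g x z := by
  rw [show (∑ i : Fin (m + 1), pd2 (fun u => Qker m g u z) i x)
      = (∑ j : Fin m, pd2 (fun u => Qker m g u z) j.castSucc x)
        + pd2 (fun u => Qker m g u z) (Fin.last m) x from Fin.sum_univ_castSucc _]
  rw [show (∑ i : Fin (m + 1), pd2 (fun v => Qker m g x v) i z)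
      = pd2 (fun v => Qker m g x v) 0 z
        + ∑ j : Fin m, pd2 (fun v => Qker m g x v) j.succ z from Fin.sum_univ_succ _]
  rw [PX_last, PZ0,
    Finset.sum_congr rfl (fun j _ => PX_cs m g x z j),
    Finset.sum_congr rfl (fun j _ => PZs m g x z j),
    ← Finset.sum_mul, ← Finset.sum_mul]
  linear_combination (scalar m g x z) * Qker m g x z
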